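/- Combined lower bound for the general objective: for A : ℝ^{n×n}, p, q ∈ ℝⁿ, and any x ∈ ℝⁿ, the objective f(x) = max( maxᵢ,ⱼ(aᵢⱼ + xⱼ - xᵢ), maxᵢ(pᵢ - xᵢ), maxᵢ(xᵢ - qᵢ) ) satisfies f(x) ≥ max(λ, Δ), where λ = max_{1≤m≤n} (1/m)·maxᵢ(Aᵐ)ᵢᵢ and Δ = (1/2)·maxᵢ(pᵢ - qᵢ). -/

import Mathlib

noncomputable def msup {n : ℕ} (hn : 0 < n) (f : Fin n → ℝ) : ℝ :=
  Finset.univ.sup' (Finset.univ_nonempty_iff.mpr (Fin.pos_iff_nonempty.mp hn)) f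

noncomputable def minf {n : ℕ} (hn : 0 < n) (f : Fin n → ℝ) : ℝ :=
  Finset.univ.inf' (Finset.univ_nonempty_iff.mpr (Fin.pos_iff_nonempty.mp hn)) f

noncomputable def mpMul {n : ℕ} (hn : 0 < n) (A B : Fin n → Fin n → ℝ) :
    Fin n → Fin n → ℝ :=
  fun i j => msup hn (fun k => A i k + B k j)

noncomputable def mpPow {n : ℕ} (hn : 0 < n) (A : Fin n → Fin n → ℝ) : ℕ → Fin n → Fin n → ℝ
  | 0 => A
  | 1 => A
  | (m + 2) => mpMul hn A (mpPow hn A (m + 1))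

lemma msup_le' {n : ℕ} (hn : 0 < n) {f : Fin n → ℝ} {c : ℝ} (h : ∀ i, f i ≤ c) :
    msup hn f ≤ c := Finset.sup'_le _ _ (fun i _ => h i)

lemma le_msup' {n : ℕ} (hn : 0 < n) (f : Fin n → ℝ) (i : Fin n) :
    f i ≤ msup hn f := Finset.le_sup' f (Finset.mem_univ i)

lemma mpPow_le {n : ℕ} (hn : 0 < n) (A : Fin n → Fin n → ℝ) (x : Fin n → ℝ) (L : ℝ)
    (hL : ∀ i j, A i j + x j - x i ≤ L) :
    ∀ m i j, mpPow hn A (m + 1) i j ≤ (m + 1 : ℝ) * L + x i - x j := by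
  intro m
  induction m with
  | zero =>
    intro i j
    have := hL i j
    simp only [mpPow]
    push_cast
    linarith
  | succ m ih =>
    intro i j
    show mpMul hn A (mpPow hn A (m + 1)) i j ≤ _
    apply msup_le'
    intro k
    have h1 := hL i k
    have h2 := ih k j
    push_cast at h2 ⊢
    linarith

theorem stmt14 {n : ℕ} (hn : 0 < n) (A : Fin n → Fin n → ℝ) (p q : Fin n → ℝ)
    (lam Δ : ℝ)
    (hlam : lam = (Finset.Icc 1 n).sup' (Finset.nonempty_Icc.mpr hn)
      (fun m => (1 / (m : ℝ)) * msup hn (fun i => mpPow hn A m i i)))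
    (hΔ : Δ = (1 / 2) * msup hn (fun i => p i - q i)) :
    ∀ x : Fin n → ℝ,
      max (msup hn (fun i => msup hn (fun j => A i j + x j - x i)))
          (max (msup hn (fun i => p i - x i)) (msup hn (fun i => x i - q i))) ≥
        max lam Δ := by
  intro x
  set L := msup hn (fun i => msup hn (fun j => A i j + x j - x i)) with hLdef
  have hL : ∀ i j, A i j + x j - x i ≤ L := by
    intro i j
    exact le_trans (le_msup' hn (fun j => A i j + x j - x i) j)
      (le_msup' hn (fun i => msup hn (fun j => A i j + x j - x i)) i)
  apply max_le
  · -- lam part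
    refine le_trans ?_ (le_max_left _ _)
    rw [hlam]
    apply Finset.sup'_le
    intro m hm
    rw [Finset.mem_Icc] at hm
    obtain ⟨m, rfl⟩ := Nat.exists_eq_add_of_le hm.1
    have hkey : msup hn (fun i => mpPow hn A (1 + m) i i) ≤ (1 + m : ℝ) * L := by
      apply msup_le'
      intro i
      have := mpPow_le hn A x L hL m i i
      rw [Nat.add_comm 1 m]
      push_cast at this ⊢
      linarith
    have hpos : (0 : ℝ) < (1 + m : ℕ) := by positivity
    calc (1 / ((1 + m : ℕ) : ℝ)) * msup hn (fun i => mpPow hn A (1 + m) i i)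
        ≤ (1 / ((1 + m : ℕ) : ℝ)) * ((1 + m : ℝ) * L) := by
          apply mul_le_mul_of_nonneg_left _ (by positivity)
          push_cast at hkey ⊢; exact hkey
      _ = L := by
          field_simp
          rw [Nat.cast_add, Nat.cast_one]
  · -- Δ part
    refine le_trans ?_ (le_max_right _ _)
    rw [hΔ]
    obtain ⟨i, _, hi⟩ := Finset.exists_mem_eq_sup' (Finset.univ_nonempty_iff.mpr
      (Fin.pos_iff_nonempty.mp hn)) (fun i => p i - q i)
    have h1 : p i - x i ≤ msup hn (fun i => p i - x i) := le_msup' hn (fun i => p i - x i) i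
    have h2 : x i - q i ≤ msup hn (fun i => x i - q i) := le_msup' hn (fun i => x i - q i) i
    have : msup hn (fun i => p i - q i) = p i - q i := hi
    rw [this]
    have hm1 : msup hn (fun i => p i - x i) ≤ max (msup hn (fun i => p i - x i)) (msup hn (fun i => x i - q i)) := le_max_left _ _
    have hm2 : msup hn (fun i => x i - q i) ≤ max (msup hn (fun i => p i - x i)) (msup hn (fun i => x i - q i)) := le_max_right _ _
    linarith
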